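/- Let a, b, c ∈ ℝ with b ≠ 0, a/b < 1 and c ≠ 0. Then Δ > 0, the real roots of f₁ are exactly 0, z₁ = c/(2b) − √Δ and z₂ = c/(2b) + √Δ, these three roots are pairwise distinct with z₁ < 0 < z₂, and β₂(z)β₃(z) < 0 at each of the three roots, i.e. all three roots are of saddle type (Darbouxian type D₃). -/

import Mathlib

noncomputable section

/-- `Δ = (c/(2b))² − a/b + 2`. -/
def disc (a b c : ℝ) : ℝ := (c / (2 * b)) ^ 2 - a / b + 2

/-- The cubic `f₁(z) = b z³ − c z² + (a − 2b) z`. -/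
def cubicF (a b c z : ℝ) : ℝ := b * z ^ 3 - c * z ^ 2 + (a - 2 * b) * z

/-- `β₂(z) = 2b z² − c z + (a − b)`. -/
def beta2 (a b c z : ℝ) : ℝ := 2 * b * z ^ 2 - c * z + (a - b)

/-- `β₃(z) = −3b z² + 2c z + (2b − a)`. -/
def beta3 (a b c z : ℝ) : ℝ := -3 * b * z ^ 2 + 2 * c * z + (2 * b - a)

lemma saddle_aux (a b c z : ℝ) (hb : b ≠ 0) (hab' : a * b < b ^ 2)
    (hq : b * z ^ 2 - c * z + (a - 2 * b) = 0) :
    beta2 a b c z * beta3 a b c z < 0 := by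
  have h2 : beta2 a b c z = b * (z ^ 2 + 1) := by unfold beta2; linear_combination hq
  have h3 : beta3 a b c z = -(b * z ^ 2) + a - 2 * b := by
    unfold beta3; linear_combination (-2 : ℝ) * hq
  rw [h2, h3]
  have hb2 : (0 : ℝ) < b ^ 2 := by positivity
  nlinarith [sq_nonneg z, mul_nonneg (sub_nonneg.mpr hab'.le) (sq_nonneg z),
    mul_nonneg hb2.le (sq_nonneg (z * z)), sq_nonneg (z ^ 2)]

theorem stmt3 (a b c : ℝ) (hb : b ≠ 0) (hab : a / b < 1) (hc : c ≠ 0) :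
    0 < disc a b c ∧
    ({z : ℝ | cubicF a b c z = 0} =
      {0, c / (2 * b) - Real.sqrt (disc a b c), c / (2 * b) + Real.sqrt (disc a b c)}) ∧
    (c / (2 * b) - Real.sqrt (disc a b c) ≠ 0 ∧
      c / (2 * b) + Real.sqrt (disc a b c) ≠ 0 ∧
      c / (2 * b) - Real.sqrt (disc a b c) ≠ c / (2 * b) + Real.sqrt (disc a b c)) ∧
    (c / (2 * b) - Real.sqrt (disc a b c) < 0 ∧
      0 < c / (2 * b) + Real.sqrt (disc a b c)) ∧
    beta2 a b c 0 * beta3 a b c 0 < 0 ∧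
    beta2 a b c (c / (2 * b) - Real.sqrt (disc a b c)) *
      beta3 a b c (c / (2 * b) - Real.sqrt (disc a b c)) < 0 ∧
    beta2 a b c (c / (2 * b) + Real.sqrt (disc a b c)) *
      beta3 a b c (c / (2 * b) + Real.sqrt (disc a b c)) < 0 := by
  set m := c / (2 * b) with hm
  have hm0 : m ≠ 0 := div_ne_zero hc (by simpa using hb)
  have hm2 : 0 < m ^ 2 := by positivity
  have hΔ : 0 < disc a b c := by unfold disc; nlinarith
  set s := Real.sqrt (disc a b c) with hsdef
  have hs : s ^ 2 = disc a b c := Real.sq_sqrt hΔ.le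
  have hms : |m| < s := by
    rw [hsdef, show |m| = Real.sqrt (m ^ 2) by rw [Real.sqrt_sq_eq_abs]]
    apply Real.sqrt_lt_sqrt (sq_nonneg m)
    unfold disc; nlinarith
  have hz1 : m - s < 0 := by have := abs_le.mp hms.le; linarith [neg_abs_le m, le_abs_self m]
  have hz2 : 0 < m + s := by linarith [neg_abs_le m]
  have hab' : a * b < b ^ 2 := by
    have hb2 : (0 : ℝ) < b ^ 2 := by positivity
    have h := mul_lt_mul_of_pos_right hab hb2
    have : a / b * b ^ 2 = a * b := by field_simp
    linarith [this ▸ h]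
  -- quadratic relations at the two roots
  have hq1 : b * (m - s) ^ 2 - c * (m - s) + (a - 2 * b) = 0 := by
    have h1 : s ^ 2 = m ^ 2 - a / b + 2 := hs
    have key : b * (m - s) ^ 2 - c * (m - s) + (a - 2 * b)
        = b * (s ^ 2 - (m ^ 2 - a / b + 2)) := by
      rw [hm]; field_simp; ring
    rw [key, h1]; ring
  have hq2 : b * (m + s) ^ 2 - c * (m + s) + (a - 2 * b) = 0 := by
    have h1 : s ^ 2 = m ^ 2 - a / b + 2 := hs
    have key : b * (m + s) ^ 2 - c * (m + s) + (a - 2 * b)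
        = b * (s ^ 2 - (m ^ 2 - a / b + 2)) := by
      rw [hm]; field_simp; ring
    rw [key, h1]; ring
  refine ⟨hΔ, ?_, ⟨ne_of_lt hz1, ne_of_gt hz2, by nlinarith⟩, ⟨hz1, hz2⟩, ?_, ?_, ?_⟩
  · ext z
    simp only [Set.mem_setOf_eq, Set.mem_insert_iff, Set.mem_singleton_iff]
    have hfac : cubicF a b c z = z * (b * z ^ 2 - c * z + (a - 2 * b)) := by
      unfold cubicF; ring
    constructor
    · intro h
      rw [hfac] at h
      rcases mul_eq_zero.mp h with h0 | hq
      · exact Or.inl h0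
      · right
        have key : b * ((z - (m - s)) * (z - (m + s))) = b * z ^ 2 - c * z + (a - 2 * b) := by
          have h1 : s ^ 2 = m ^ 2 - a / b + 2 := hs
          have hc2 : 2 * b * m = c := by rw [hm]; field_simp
          have hbs : b * (m ^ 2 - s ^ 2) = a - 2 * b := by
            rw [h1]; field_simp; ring
          linear_combination (-z) * hc2 + hbs
        have : b * ((z - (m - s)) * (z - (m + s))) = 0 := by rw [key, hq]
        rcases mul_eq_zero.mp this with h' | h'
        · exact absurd h' hb
        · rcases mul_eq_zero.mp h' with h'' | h''
          · exact Or.inl (by linarith [sub_eq_zero.mp h''])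
          · exact Or.inr (by linarith [sub_eq_zero.mp h''])
    · rintro (rfl | rfl | rfl)
      · unfold cubicF; ring
      · rw [hfac]; rw [hq1]; ring
      · rw [hfac]; rw [hq2]; ring
  · -- at 0
    have : beta2 a b c 0 = a - b := by unfold beta2; ring
    have h3 : beta3 a b c 0 = 2 * b - a := by unfold beta3; ring
    rw [this, h3]
    nlinarith [sq_nonneg (a - b)]
  · exact saddle_aux a b c _ hb hab' hq1
  · exact saddle_aux a b c _ hb hab' hq2
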